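/- For all n ≥ 6, a permutation π of {1,…,n} with π_{n−1} = n (the letter n in the second-to-last position) satisfies ssc(π) = n−3 if and only if one of the following holds: (a) π_n = 3; (b) 3 < π_n < n−1 and π ends with the suffix (n−1),1,n,π_n; (c) π_n = n−1 and π ends with the suffix (n−2),1,n,(n−1). -/

import Mathlib

/-- The largest letter of a word (`0` for the empty word). -/
def listMax (l : List ℕ) : ℕ := l.foldr max 0

lemma listMax_mem {l : List ℕ} (h : l ≠ []) : listMax l ∈ l := by
  induction l with
  | nil => simp at h
  | cons a t ih =>
    rcases eq_or_ne t [] with rfl | ht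
    · simp [listMax]
    · have ht' := ih ht
      have hcons : listMax (a :: t) = max a (listMax t) := rfl
      rcases le_total a (listMax t) with hle | hle
      · rw [hcons, max_eq_right hle]; exact List.mem_cons_of_mem _ ht'
      · rw [hcons, max_eq_left hle]; exact List.mem_cons_self

/-- The stack-sorting operator `S`: `S` of the empty word is the empty word, and
if `π` is nonempty, writing `π = L·m·R` where `m` is the greatest letter of `π`,
then `S(π) = S(L)·S(R)·m`. -/
def stackSort : List ℕ → List ℕ
  | [] => []
  | x :: xs =>
    stackSort ((x :: xs).take ((x :: xs).idxOf (listMax (x :: xs)))) ++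
      stackSort ((x :: xs).drop ((x :: xs).idxOf (listMax (x :: xs)) + 1)) ++
      [listMax (x :: xs)]
termination_by l => l.length
decreasing_by
  · have hm : listMax (x :: xs) ∈ x :: xs := listMax_mem (by simp)
    have hi : (x :: xs).idxOf (listMax (x :: xs)) < (x :: xs).length :=
      List.idxOf_lt_length_iff.mpr hm
    simp only [List.length_take, List.length_cons] at *
    omega
  · simp only [List.length_drop, List.length_cons]
    omega

/-- `π` is a permutation of `{1, …, n}`, viewed as a word containing each of
`1, …, n` exactly once. -/
def IsPermWord (n : ℕ) (π : List ℕ) : Prop := π.Perm (List.range' 1 n)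

/-- The stack-sorting complexity of `π`: the least `k ≥ 0` such that `S^k(π)`
is the identity word `1, 2, …, n` (where `n` is the length of `π`). -/
noncomputable def ssc (π : List ℕ) : ℕ :=
  sInf {k : ℕ | stackSort^[k] π = List.range' 1 π.length}

/-! ### Basic facts about `listMax` -/

lemma le_listMax {l : List ℕ} {y : ℕ} (h : y ∈ l) : y ≤ listMax l := by
  induction l with
  | nil => simp at h
  | cons a t ih =>
    have hcons : listMax (a :: t) = max a (listMax t) := rfl
    rcases List.mem_cons.mp h with rfl | ht
    · rw [hcons]; exact le_max_left _ _
    · rw [hcons]; exact le_trans (ih ht) (le_max_right _ _)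

lemma listMax_eq {l : List ℕ} {m : ℕ} (hm : m ∈ l) (hb : ∀ y ∈ l, y ≤ m) :
    listMax l = m :=
  le_antisymm (hb _ (listMax_mem (List.ne_nil_of_mem hm))) (le_listMax hm)

lemma listMax_perm {l r : List ℕ} (h : l.Perm r) : listMax l = listMax r := by
  rcases eq_or_ne l [] with rfl | hl
  · have : r = [] := h.symm.eq_nil
    rw [this]
  · have hr : r ≠ [] := by
      intro hr; rw [hr] at h; exact hl h.eq_nil
    exact listMax_eq (h.mem_iff.mpr (listMax_mem hr))
      (fun y hy => le_listMax (h.mem_iff.mp hy))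

/-! ### Splitting `stackSort` at the maximum -/

lemma stackSort_nil : stackSort [] = [] := by rw [stackSort]

lemma indexOf_append_cons_self {m : ℕ} {R : List ℕ} :
    ∀ {L : List ℕ}, m ∉ L → (L ++ m :: R).idxOf m = L.length := by
  intro L
  induction L with
  | nil => simp
  | cons a t ih =>
    intro hm
    have ha : (a == m) = false := by
      simp only [beq_eq_false_iff_ne, ne_eq]
      intro h; exact hm (by simp [h])
    simp only [List.cons_append, List.idxOf_cons, ha, cond_false, List.length_cons]
    rw [ih (fun h => hm (List.mem_cons_of_mem _ h))]

lemma stackSort_split {L R : List ℕ} {m : ℕ} (hL : ∀ y ∈ L, y < m)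
    (hR : ∀ y ∈ R, y < m) :
    stackSort (L ++ m :: R) = stackSort L ++ stackSort R ++ [m] := by
  have hmem : m ∈ L ++ m :: R := by simp
  have hmax : listMax (L ++ m :: R) = m := by
    apply listMax_eq hmem
    intro y hy
    rcases List.mem_append.mp hy with h | h
    · exact le_of_lt (hL y h)
    · rcases List.mem_cons.mp h with rfl | h
      · exact le_refl _
      · exact le_of_lt (hR y h)
  have hnotL : m ∉ L := fun h => lt_irrefl m (hL m h)
  have hidx : (L ++ m :: R).idxOf m = L.length := indexOf_append_cons_self hnotL
  have hne : L ++ m :: R ≠ [] := by simp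
  have hunf : stackSort (L ++ m :: R) =
      stackSort ((L ++ m :: R).take ((L ++ m :: R).idxOf (listMax (L ++ m :: R)))) ++
      stackSort ((L ++ m :: R).drop ((L ++ m :: R).idxOf (listMax (L ++ m :: R)) + 1)) ++
      [listMax (L ++ m :: R)] := by
    cases hLR : L ++ m :: R with
    | nil => exact absurd hLR hne
    | cons x xs => rw [← hLR, hLR, stackSort, ← hLR]
  rw [hunf, hmax, hidx]
  congr 1
  · congr 1
    · congr 1
      exact List.take_left (l₁ := L) (l₂ := m :: R)
    · congr 1
      have : (L ++ m :: R).drop (L.length + 1) = (m :: R).drop 1 := by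
        rw [show L.length + 1 = L.length + 1 from rfl]
        rw [List.drop_append]
        simp
      simpa using this

/-- Decomposition of a nodup nonempty list at its max. -/
lemma exists_max_split {l : List ℕ} (hne : l ≠ []) (hnd : l.Nodup) :
    ∃ T D : List ℕ, l = T ++ listMax l :: D ∧ (∀ y ∈ T, y < listMax l) ∧
      (∀ y ∈ D, y < listMax l) := by
  obtain ⟨T, D, hTD⟩ := List.append_of_mem (listMax_mem hne)
  refine ⟨T, D, hTD, ?_, ?_⟩
  · intro y hy
    have h1 : y ≤ listMax l := le_listMax (by rw [hTD]; simp [hy])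
    have h2 : y ≠ listMax l := by
      rintro rfl
      rw [hTD] at hnd
      exact (List.disjoint_of_nodup_append hnd) hy (by simp)
    exact lt_of_le_of_ne h1 h2
  · intro y hy
    have h1 : y ≤ listMax l := le_listMax (by rw [hTD]; simp [hy])
    have h2 : y ≠ listMax l := by
      rintro rfl
      rw [hTD] at hnd
      have := (List.nodup_append.mp hnd).2.1
      simp at this
      exact this.1 hy
    exact lt_of_le_of_ne h1 h2

lemma stackSort_perm_aux :
    ∀ (k : ℕ) (l : List ℕ), l.length ≤ k → l.Nodup → (stackSort l).Perm l := by
  intro k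
  induction k with
  | zero =>
    intro l hl _
    rw [List.eq_nil_of_length_eq_zero (Nat.le_zero.mp hl), stackSort_nil]
  | succ k ih =>
    intro l hl hnd
    rcases eq_or_ne l [] with rfl | hne
    · rw [stackSort_nil]
    · obtain ⟨T, D, hTD, hT, hD⟩ := exists_max_split hne hnd
      have hndT : T.Nodup := by rw [hTD] at hnd; exact hnd.sublist (by simp)
      have hndD : D.Nodup := by
        rw [hTD] at hnd
        exact hnd.sublist ((List.sublist_cons_self _ _).trans (List.sublist_append_right _ _))
      have hlen : T.length + (D.length + 1) = l.length := by
        rw [hTD]; simp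
      have hpT : (stackSort T).Perm T := ih T (by omega) hndT
      have hpD : (stackSort D).Perm D := ih D (by omega) hndD
      rw [hTD, stackSort_split hT hD]
      refine ((hpT.append hpD).append_right _).trans ?_
      rw [List.append_assoc]
      exact (List.perm_append_left_iff _).mpr (List.perm_append_singleton _ _)

lemma stackSort_perm {l : List ℕ} (hnd : l.Nodup) : (stackSort l).Perm l :=
  stackSort_perm_aux l.length l le_rfl hnd

/-! ### The truncated operator `sdrop` -/

/-- `stackSort` with the final (maximal) letter removed. -/
def sdrop (l : List ℕ) : List ℕ := (stackSort l).dropLast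

lemma sdrop_nil : sdrop [] = [] := by rw [sdrop, stackSort_nil]; rfl

lemma stackSort_eq_sdrop {l : List ℕ} (hne : l ≠ []) (hnd : l.Nodup) :
    stackSort l = sdrop l ++ [listMax l] := by
  obtain ⟨T, D, hTD, hT, hD⟩ := exists_max_split hne hnd
  have h := stackSort_split hT hD
  rw [← hTD] at h
  rw [sdrop, h, List.dropLast_concat]

lemma sdrop_perm_erase {l : List ℕ} (hne : l ≠ []) (hnd : l.Nodup) :
    (sdrop l).Perm (l.erase (listMax l)) := by
  have h2 : (stackSort l).Perm (l.erase (listMax l) ++ [listMax l]) :=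
    (stackSort_perm hnd).trans ((List.perm_cons_erase (listMax_mem hne)).trans
      (List.perm_append_singleton _ _).symm)
  have h1 : (sdrop l ++ [listMax l]).Perm (l.erase (listMax l) ++ [listMax l]) := by
    rw [← stackSort_eq_sdrop hne hnd]; exact h2
  exact (List.perm_append_right_iff _).mp h1

lemma sdrop_length {l : List ℕ} (hne : l ≠ []) (hnd : l.Nodup) :
    (sdrop l).length = l.length - 1 := by
  rw [(sdrop_perm_erase hne hnd).length_eq,
    List.length_erase_of_mem (listMax_mem hne)]

lemma sdrop_nodup {l : List ℕ} (hnd : l.Nodup) : (sdrop l).Nodup := by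
  rcases eq_or_ne l [] with rfl | hne
  · rw [sdrop_nil]; exact List.nodup_nil
  · exact (sdrop_perm_erase hne hnd).nodup_iff.mpr (hnd.erase _)

lemma sdrop_subset {l : List ℕ} (hnd : l.Nodup) : ∀ y ∈ sdrop l, y ∈ l := by
  rcases eq_or_ne l [] with rfl | hne
  · intro y hy; rw [sdrop_nil] at hy; exact hy
  · intro y hy
    exact List.mem_of_mem_erase ((sdrop_perm_erase hne hnd).mem_iff.mp hy)

lemma sdrop_lt_max {l : List ℕ} (hne : l ≠ []) (hnd : l.Nodup) :
    ∀ y ∈ sdrop l, y < listMax l := by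
  intro y hy
  have h := (sdrop_perm_erase hne hnd).mem_iff.mp hy
  have h2 := (hnd.mem_erase_iff.mp h)
  exact lt_of_le_of_ne (le_listMax h2.2) h2.1

/-! ### Iterates of `sdrop` -/

lemma sdropIter_nodup {l : List ℕ} (hnd : l.Nodup) (k : ℕ) :
    (sdrop^[k] l).Nodup := by
  induction k generalizing l with
  | zero => exact hnd
  | succ k ih =>
    rw [Function.iterate_succ_apply]
    exact ih (sdrop_nodup hnd)

lemma sdropIter_length {l : List ℕ} (hnd : l.Nodup) :
    ∀ k, k ≤ l.length → (sdrop^[k] l).length = l.length - k := by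
  intro k
  induction k generalizing l with
  | zero => simp
  | succ k ih =>
    intro hk
    have hne : l ≠ [] := by
      intro h; rw [h] at hk; simp at hk
    rw [Function.iterate_succ_apply, ih (sdrop_nodup hnd)
      (by rw [sdrop_length hne hnd]; omega), sdrop_length hne hnd]
    omega

lemma sdropIter_subset {l : List ℕ} (hnd : l.Nodup) :
    ∀ k, ∀ y ∈ sdrop^[k] l, y ∈ l := by
  intro k
  induction k generalizing l with
  | zero => intro y hy; exact hy
  | succ k ih =>
    intro y hy
    rw [Function.iterate_succ_apply] at hy
    exact sdrop_subset hnd y (ih (sdrop_nodup hnd) y hy)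

/-! ### Sorted words -/

lemma stackSort_sorted_fixed_aux :
    ∀ (k : ℕ) (l : List ℕ), l.length ≤ k → l.Pairwise (· < ·) → stackSort l = l := by
  intro k
  induction k with
  | zero =>
    intro l hl _
    rw [List.eq_nil_of_length_eq_zero (Nat.le_zero.mp hl), stackSort_nil]
  | succ k ih =>
    intro l hl hs
    rcases eq_or_ne l [] with rfl | hne
    · exact stackSort_nil
    · have hdec : l.dropLast ++ [l.getLast hne] = l := List.dropLast_append_getLast hne
      have hb : ∀ y ∈ l.dropLast, y < l.getLast hne := by
        intro y hy
        have hs' : (l.dropLast ++ [l.getLast hne]).Pairwise (· < ·) := by rw [hdec]; exact hs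
        have := (List.pairwise_append.mp hs').2.2
        exact this y hy _ (by simp)
      have hsd : l.dropLast.Pairwise (· < ·) := hs.sublist (List.dropLast_sublist l)
      have hld : l.dropLast.length ≤ k := by
        have := List.length_dropLast (xs := l)
        have hpos : 0 < l.length := List.length_pos_iff.mpr hne
        omega
      conv_lhs => rw [← hdec]
      rw [show l.dropLast ++ [l.getLast hne] = l.dropLast ++ l.getLast hne :: [] from rfl]
      rw [stackSort_split hb (by simp), ih _ hld hsd, stackSort_nil]
      simp only [List.append_nil]
      exact hdec

lemma stackSort_sorted_fixed {l : List ℕ} (hs : l.Pairwise (· < ·)) : stackSort l = l :=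
  stackSort_sorted_fixed_aux l.length l le_rfl hs

lemma stackSortIter_perm {l : List ℕ} (hnd : l.Nodup) (k : ℕ) :
    (stackSort^[k] l).Perm l := by
  induction k with
  | zero => exact List.Perm.refl l
  | succ k ih =>
    rw [Function.iterate_succ_apply']
    exact (stackSort_perm (ih.nodup_iff.mpr hnd)).trans ih

/-- Appending the max passes through `stackSort`. -/
lemma stackSort_append_max {A : List ℕ} {m : ℕ} (hA : ∀ y ∈ A, y < m) :
    stackSort (A ++ [m]) = stackSort A ++ [m] := by
  have := stackSort_split (R := []) hA (by simp)
  rw [show A ++ m :: [] = A ++ [m] from rfl] at this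
  rw [this, stackSort_nil]
  simp

/-- Iterates of `stackSort` versus iterates of `sdrop`. -/
lemma stackSortIter_eq {l : List ℕ} (hne : l ≠ []) (hnd : l.Nodup) (k : ℕ) :
    stackSort^[k + 1] l = stackSort^[k] (sdrop l) ++ [listMax l] := by
  induction k with
  | zero =>
    simpa using stackSort_eq_sdrop hne hnd
  | succ k ih =>
    rw [Function.iterate_succ_apply' (f := stackSort) (n := k + 1), ih,
      Function.iterate_succ_apply' (f := stackSort) (n := k)]
    apply stackSort_append_max
    intro y hy
    have hy' : y ∈ sdrop l :=
      (stackSortIter_perm (sdrop_nodup hnd) k).mem_iff.mp hy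
    exact sdrop_lt_max hne hnd y hy'

lemma sorted_iterate_iff {l : List ℕ} (hnd : l.Nodup) :
    ∀ k, ((stackSort^[k] l).Pairwise (· < ·) ↔ (sdrop^[k] l).Pairwise (· < ·)) := by
  intro k
  induction k generalizing l with
  | zero => exact Iff.rfl
  | succ k ih =>
    rcases eq_or_ne l [] with rfl | hne
    · rw [Function.iterate_fixed stackSort_nil, Function.iterate_fixed sdrop_nil]
    · rw [stackSortIter_eq hne hnd, Function.iterate_succ_apply]
      constructor
      · intro h
        exact (ih (sdrop_nodup hnd)).mp (h.sublist (List.sublist_append_left _ _))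
      · intro h
        rw [List.pairwise_append]
        refine ⟨(ih (sdrop_nodup hnd)).mpr h, by simp, ?_⟩
        intro y hy z hz
        rw [List.mem_singleton] at hz
        subst hz
        have hy2 : y ∈ sdrop l :=
          (stackSortIter_perm (sdrop_nodup hnd) k).mem_iff.mp hy
        exact sdrop_lt_max hne hnd y hy2
/-! ### Characterizing `ssc` via sortedness of `sdrop` iterates -/

lemma ssc_eq_iff {π : List ℕ} {n t : ℕ} (hperm : π.Perm (List.range' 1 n)) (ht : 1 ≤ t) :
    ssc π = t ↔ ((sdrop^[t] π).Pairwise (· < ·) ∧ ¬ (sdrop^[t-1] π).Pairwise (· < ·)) := by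
  haveI : IsAntisymm ℕ (· < ·) := ⟨fun a b h h' => absurd h' (lt_asymm h)⟩
  have hlen : π.length = n := by rw [hperm.length_eq, List.length_range']
  have hnd : π.Nodup := hperm.nodup_iff.mpr (List.nodup_range' (s := 1) (n := n))
  have hsr : (List.range' 1 n).Pairwise (· < ·) := List.pairwise_lt_range' (s := 1) (n := n)
  have memIff : ∀ k, (stackSort^[k] π = List.range' 1 π.length ↔
      (sdrop^[k] π).Pairwise (· < ·)) := by
    intro k
    rw [hlen, ← sorted_iterate_iff hnd k]
    constructor
    · intro h; rw [h]; exact hsr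
    · intro h
      exact List.Perm.eq_of_pairwise (fun a b _ _ h1 h2 => absurd h2 (lt_asymm h1)) h hsr ((stackSortIter_perm hnd k).trans hperm)
  have hup : ∀ k, stackSort^[k] π = List.range' 1 π.length →
      ∀ j, k ≤ j → stackSort^[j] π = List.range' 1 π.length := by
    intro k hk j hj
    induction j, hj using Nat.le_induction with
    | base => exact hk
    | succ j hj ih =>
      rw [Function.iterate_succ_apply', ih, hlen]
      exact stackSort_sorted_fixed hsr
  rw [ssc]
  constructor
  · intro h
    have hSne : {k | stackSort^[k] π = List.range' 1 π.length}.Nonempty := by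
      by_contra hc
      rw [Set.not_nonempty_iff_eq_empty] at hc
      rw [hc, Nat.sInf_empty] at h
      omega
    have hmem := Nat.sInf_mem hSne
    rw [h] at hmem
    have hnot : (t-1) ∉ {k | stackSort^[k] π = List.range' 1 π.length} := by
      intro hc
      have := Nat.sInf_le hc
      omega
    exact ⟨(memIff t).mp hmem, fun hs => hnot ((memIff (t-1)).mpr hs)⟩
  · rintro ⟨h1, h2⟩
    have hmem : t ∈ {k | stackSort^[k] π = List.range' 1 π.length} := (memIff t).mpr h1
    have hle := Nat.sInf_le hmem
    have hge : ¬ sInf {k | stackSort^[k] π = List.range' 1 π.length} < t := by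
      intro hc
      have hmem' := Nat.sInf_mem (⟨t, hmem⟩ :
        Set.Nonempty {k | stackSort^[k] π = List.range' 1 π.length})
      have := hup _ hmem' (t-1) (by omega)
      exact h2 ((memIff (t-1)).mp this)
    omega

/-! ### One step of `sdrop` on words of the form `a ++ [b, c]` -/

lemma stackSort_singleton (c : ℕ) : stackSort [c] = [c] := by
  have := stackSort_split (L := []) (R := []) (m := c) (by simp) (by simp)
  simpa [stackSort_nil] using this

lemma sdrop_step {a : List ℕ} {b c : ℕ} (hne : a ≠ []) (hnd : a.Nodup)
    (hb : ∀ y ∈ a, y < b) (hbc : b ≠ c) :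
    sdrop (a ++ [b, c]) = sdrop a ++ [listMax a, min b c] := by
  rcases lt_or_gt_of_ne hbc with hlt | hgt
  · have h1 : stackSort (a ++ [b]) = stackSort a ++ [b] := stackSort_append_max hb
    have h2 : stackSort ((a ++ [b]) ++ [c]) = stackSort (a ++ [b]) ++ [c] := by
      apply stackSort_append_max
      intro y hy
      rcases List.mem_append.mp hy with h | h
      · exact lt_trans (hb y h) hlt
      · rw [List.mem_singleton] at h; subst h; exact hlt
    have h3 : a ++ [b, c] = (a ++ [b]) ++ [c] := by simp
    rw [sdrop, h3, h2, h1, List.dropLast_concat, stackSort_eq_sdrop hne hnd,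
      min_eq_left hlt.le]
    simp
  · have h1 : stackSort (a ++ b :: [c]) = stackSort a ++ stackSort [c] ++ [b] := by
      apply stackSort_split hb
      intro y hy
      rw [List.mem_singleton] at hy; subst hy; exact hgt
    rw [sdrop, show a ++ [b, c] = a ++ b :: [c] from rfl, h1, stackSort_singleton,
      List.dropLast_concat, stackSort_eq_sdrop hne hnd, min_eq_right hgt.le]
    simp

/-! ### The tail values `Bf`, `Cf` -/

def Bf (a : List ℕ) (b : ℕ) : ℕ → ℕ
  | 0 => b
  | k+1 => listMax (sdrop^[k] a)

def Cf (a : List ℕ) (b c : ℕ) : ℕ → ℕ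
  | 0 => c
  | k+1 => min (Bf a b k) (Cf a b c k)

lemma sdropIter_ne_nil {a : List ℕ} (hnd : a.Nodup) {k : ℕ} (hk : k < a.length) :
    sdrop^[k] a ≠ [] := by
  have := sdropIter_length hnd k (le_of_lt hk)
  intro h
  rw [h] at this
  simp at this
  omega

lemma sdropIter_lt_Bf {a : List ℕ} {b : ℕ} (hnd : a.Nodup) (hb : ∀ y ∈ a, y < b) :
    ∀ k, ∀ y ∈ sdrop^[k] a, y < Bf a b k := by
  intro k
  cases k with
  | zero => exact hb
  | succ j =>
    intro y hy
    rw [Function.iterate_succ_apply'] at hy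
    have hne : sdrop^[j] a ≠ [] := by
      intro h; rw [h, sdrop_nil] at hy; exact absurd hy (List.not_mem_nil)
    exact sdrop_lt_max hne (sdropIter_nodup hnd j) y hy

lemma Bf_mem {a : List ℕ} {b : ℕ} (hnd : a.Nodup) {k : ℕ} (h1 : 1 ≤ k)
    (h2 : k ≤ a.length) : Bf a b k ∈ a := by
  cases k with
  | zero => omega
  | succ j =>
    have hne : sdrop^[j] a ≠ [] := sdropIter_ne_nil hnd (by omega)
    exact sdropIter_subset hnd j _ (listMax_mem hne)

lemma Bf_lt {a : List ℕ} {b : ℕ} (hnd : a.Nodup) (hb : ∀ y ∈ a, y < b) {k : ℕ}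
    (hk : k + 1 ≤ a.length) : Bf a b (k+1) < Bf a b k := by
  have hne : sdrop^[k] a ≠ [] := sdropIter_ne_nil hnd (by omega)
  exact sdropIter_lt_Bf hnd hb k _ (listMax_mem hne)

lemma Cf_val {a : List ℕ} {b c : ℕ} (hnd : a.Nodup) (hb : ∀ y ∈ a, y < b) :
    ∀ k, k ≤ a.length → Cf a b c (k+1) = min c (Bf a b k) := by
  intro k
  induction k with
  | zero => intro _
            rw [show Cf a b c 1 = min (Bf a b 0) (Cf a b c 0) from rfl]
            rw [show Bf a b 0 = b from rfl, show Cf a b c 0 = c from rfl, min_comm]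
  | succ k ih =>
    intro hk
    have hlt : Bf a b (k+1) ≤ Bf a b k := (Bf_lt hnd hb hk).le
    rw [show Cf a b c (k+2) = min (Bf a b (k+1)) (Cf a b c (k+1)) from rfl,
      ih (by omega), min_comm c (Bf a b k), ← min_assoc,
      min_eq_left hlt, min_comm]

lemma Bf_ne_Cf {a : List ℕ} {b c : ℕ} (hnd : a.Nodup) (hb : ∀ y ∈ a, y < b)
    (hc : c ∉ a) {k : ℕ} (h1 : 1 ≤ k) (h2 : k ≤ a.length) :
    Bf a b k ≠ Cf a b c k := by
  obtain ⟨j, rfl⟩ : ∃ j, k = j + 1 := ⟨k - 1, by omega⟩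
  rw [Cf_val hnd hb j (by omega)]
  have hBlt : Bf a b (j+1) < Bf a b j := Bf_lt hnd hb (by omega)
  have hBmem : Bf a b (j+1) ∈ a := Bf_mem hnd (by omega) h2
  rcases min_choice c (Bf a b j) with h | h
  · rw [h]; intro hcon; exact hc (hcon ▸ hBmem)
  · rw [h]; omega

/-- The key iteration formula for words of the shape `a ++ [b, c]`. -/
lemma key_iter {a : List ℕ} {b c : ℕ} (hnd : a.Nodup) (hb : ∀ y ∈ a, y < b)
    (hbc : b ≠ c) (hc : c ∉ a) :
    ∀ k, k ≤ a.length →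
      sdrop^[k] (a ++ [b, c]) = sdrop^[k] a ++ [Bf a b k, Cf a b c k] := by
  intro k
  induction k with
  | zero => simp [Bf, Cf]
  | succ k ih =>
    intro hk
    have hne : sdrop^[k] a ≠ [] := sdropIter_ne_nil hnd (by omega)
    have hndk : (sdrop^[k] a).Nodup := sdropIter_nodup hnd k
    have hbk : ∀ y ∈ sdrop^[k] a, y < Bf a b k := sdropIter_lt_Bf hnd hb k
    have hbck : Bf a b k ≠ Cf a b c k := by
      cases k with
      | zero => exact hbc
      | succ j => exact Bf_ne_Cf hnd hb hc (by omega) (by omega)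
    rw [Function.iterate_succ_apply' (f := sdrop), ih (by omega),
      sdrop_step hne hndk hbk hbck,
      ← Function.iterate_succ_apply' (f := sdrop)]
    rfl

/-! ### Letter sets of iterates -/

lemma sdrop_perm_of_perm {l r : List ℕ} (h : l.Perm r) (hne : l ≠ [])
    (hnd : l.Nodup) : (sdrop l).Perm (r.erase (listMax l)) :=
  (sdrop_perm_erase hne hnd).trans (h.erase _)

lemma range'_erase_top {m : ℕ} (hm : 1 ≤ m) :
    (List.range' 1 m).erase m = List.range' 1 (m-1) := by
  obtain ⟨j, rfl⟩ : ∃ j, m = j + 1 := ⟨m - 1, by omega⟩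
  rw [List.range'_concat]
  have h11 : 1 + 1 * j = j + 1 := by omega
  rw [h11]
  have hnot : (j + 1) ∉ List.range' 1 j := by
    rw [List.mem_range'_1]; omega
  rw [List.erase_append_right _ hnot]
  simp

lemma listMax_range' {m : ℕ} (hm : 1 ≤ m) : listMax (List.range' 1 m) = m := by
  apply listMax_eq
  · rw [List.mem_range'_1]; omega
  · intro y hy; rw [List.mem_range'_1] at hy; omega

lemma listMax_range'_erase {x m : ℕ} (hx : x < m) (hm : 1 ≤ m) :
    listMax ((List.range' 1 m).erase x) = m := by
  apply listMax_eq
  · rw [(List.nodup_range' (s := 1) (n := m)).mem_erase_iff]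
    exact ⟨by omega, by rw [List.mem_range'_1]; omega⟩
  · intro y hy
    have := List.mem_of_mem_erase hy
    rw [List.mem_range'_1] at this; omega

/-- Letter-set tracking for the iterates of a word that is a permutation of
`{1,…,n-1} \ {x}`. -/
lemma letters_iter {n x : ℕ} {w : List ℕ} (hx1 : 1 ≤ x) (hxn : x ≤ n - 1)
    (hn : 2 ≤ n) (hw : w.Perm ((List.range' 1 (n-1)).erase x)) :
    ∀ j, j ≤ n - 2 → (sdrop^[j] w).Perm
      (if j + x ≤ n - 1 then (List.range' 1 (n-1-j)).erase x
       else List.range' 1 (n-2-j)) := by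
  have hxr : x ∈ List.range' 1 (n-1) := by rw [List.mem_range'_1]; omega
  have hwlen : w.length = n - 2 := by
    rw [hw.length_eq, List.length_erase_of_mem hxr, List.length_range']; omega
  have hwnd : w.Nodup := hw.nodup_iff.mpr ((List.nodup_range' (s := 1) (n := n-1)).erase _)
  intro j
  induction j with
  | zero =>
    intro _
    rw [if_pos (by omega)]
    simpa using hw
  | succ j ih =>
    intro hj
    have hjle : j ≤ n - 2 := by omega
    have hIH := ih hjle
    have hne : sdrop^[j] w ≠ [] := by
      have := sdropIter_length hwnd j (by omega)
      intro h; rw [h] at this; simp at this; omega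
    have hndj : (sdrop^[j] w).Nodup := sdropIter_nodup hwnd j
    rw [Function.iterate_succ_apply']
    by_cases h1 : j + x ≤ n - 1
    · rw [if_pos h1] at hIH
      by_cases h2 : j + 1 + x ≤ n - 1
      · -- still below the boundary
        rw [if_pos h2]
        have hmax : listMax (sdrop^[j] w) = n - 1 - j := by
          rw [listMax_perm hIH, listMax_range'_erase (by omega) (by omega)]
        have := sdrop_perm_of_perm hIH hne hndj
        rw [hmax] at this
        refine this.trans ?_
        rw [List.erase_comm, range'_erase_top (by omega)]
        have : n - 1 - j - 1 = n - 1 - (j+1) := by omega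
        rw [this]
      · -- crossing the boundary: j + x = n - 1
        rw [if_neg h2]
        have hxj : n - 1 - j = x := by omega
        have hx2 : 2 ≤ x := by omega
        have hIH' : (sdrop^[j] w).Perm (List.range' 1 (x-1)) := by
          rw [hxj] at hIH
          refine hIH.trans ?_
          rw [range'_erase_top (by omega)]
        have hmax : listMax (sdrop^[j] w) = x - 1 := by
          rw [listMax_perm hIH', listMax_range' (by omega)]
        have := sdrop_perm_of_perm hIH' hne hndj
        rw [hmax] at this
        refine this.trans ?_
        rw [range'_erase_top (by omega)]
        have hq : x - 1 - 1 = n - 2 - (j+1) := by omega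
        rw [hq]
    · -- past the boundary
      rw [if_neg (show ¬ (j + 1 + x ≤ n - 1) by omega)]
      rw [if_neg h1] at hIH
      have hmax : listMax (sdrop^[j] w) = n - 2 - j := by
        rw [listMax_perm hIH, listMax_range' (by omega)]
      have := sdrop_perm_of_perm hIH hne hndj
      rw [hmax] at this
      refine this.trans ?_
      rw [range'_erase_top (by omega)]
      have hq : n - 2 - j - 1 = n - 2 - (j+1) := by omega
      rw [hq]

/-! ### Words ending with `[max, 1]` -/

lemma eq_one_of_nodup {D : List ℕ} (hnd : D.Nodup) (hne : D ≠ [])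
    (h : ∀ y ∈ D, y = 1) : D = [1] := by
  cases D with
  | nil => exact absurd rfl hne
  | cons d D2 =>
    have hd : d = 1 := h d (by simp)
    cases D2 with
    | nil => rw [hd]
    | cons e D3 =>
      have he : e = 1 := h e (by simp)
      rw [hd, he] at hnd
      simp at hnd

/-- If `sdrop l` ends with the letter `1`, then `l` ends with `[max l, 1]`. -/
lemma ends_of_sdrop_last {l : List ℕ} (hnd : l.Nodup) (hpos : ∀ y ∈ l, 1 ≤ y)
    (hlen : 3 ≤ l.length) (h : (sdrop l).getLast? = some 1) :
    ∃ v, l = v ++ [listMax l, 1] := by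
  have hne : l ≠ [] := by intro hc; rw [hc] at hlen; simp at hlen
  obtain ⟨T, D, hTD, hT, hD⟩ := exists_max_split hne hnd
  have hsd : sdrop l = stackSort T ++ stackSort D := by
    rw [sdrop, hTD, stackSort_split hT hD, List.dropLast_concat]
  have hndT : T.Nodup := by rw [hTD] at hnd; exact hnd.sublist (by simp)
  have hndD : D.Nodup := by
    rw [hTD] at hnd
    exact hnd.sublist ((List.sublist_cons_self _ _).trans (List.sublist_append_right _ _))
  rcases eq_or_ne D [] with rfl | hDne
  · -- impossible : the last letter of `stackSort T` is `max T ≥ 2`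
    exfalso
    have hTlen : 2 ≤ T.length := by
      have : l.length = T.length + 1 := by rw [hTD]; simp
      omega
    have hTne : T ≠ [] := by intro hc; rw [hc] at hTlen; simp at hTlen
    rw [hsd, stackSort_nil, List.append_nil, stackSort_eq_sdrop hTne hndT,
      List.getLast?_concat] at h
    have hmax1 : listMax T = 1 := by
      injection h
    obtain ⟨t1, t2, T3, hT3⟩ : ∃ t1 t2 T3, T = t1 :: t2 :: T3 := by
      cases T with
      | nil => simp at hTlen
      | cons t1 T2 =>
        cases T2 with
        | nil => simp at hTlen
        | cons t2 T3 => exact ⟨t1, t2, T3, rfl⟩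
    have h1 : t1 ≤ 1 := hmax1 ▸ le_listMax (by rw [hT3]; simp)
    have h2 : t2 ≤ 1 := hmax1 ▸ le_listMax (by rw [hT3]; simp)
    have hp1 : 1 ≤ t1 := hpos t1 (by rw [hTD, hT3]; simp)
    have hp2 : 1 ≤ t2 := hpos t2 (by rw [hTD, hT3]; simp)
    rw [hT3] at hndT
    have : t1 ≠ t2 := by simp at hndT; tauto
    omega
  · -- then `D = [1]`
    rw [hsd, stackSort_eq_sdrop hDne hndD, ← List.append_assoc,
      List.getLast?_concat] at h
    have hmaxD : listMax D = 1 := by injection h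
    have hD1 : D = [1] := by
      apply eq_one_of_nodup hndD hDne
      intro y hy
      have := le_listMax hy
      have := hpos y (by rw [hTD]; simp [hy])
      omega
    refine ⟨T, ?_⟩
    conv_lhs => rw [hTD, hD1]

/-- If `l` ends with `[max l, 1]`, so does `sdrop l` (with its own max). -/
lemma ends_step {l v : List ℕ} (hnd : l.Nodup) (hpos : ∀ y ∈ l, 1 ≤ y)
    (hlen : 3 ≤ l.length) (hv : l = v ++ [listMax l, 1]) :
    sdrop l = sdrop v ++ [listMax (sdrop l), 1] ∧
      (sdrop l).getLast? = some 1 := by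
  have hvne : v ≠ [] := by
    intro hc
    rw [hc] at hv
    rw [hv] at hlen
    simp at hlen
  have hndv : v.Nodup := by rw [hv] at hnd; exact hnd.sublist (by simp)
  have hdisj := List.disjoint_of_nodup_append (hv ▸ hnd)
  have hbv : ∀ y ∈ v, y < listMax l := by
    intro y hy
    have h1 : y ≤ listMax l := le_listMax (by rw [hv]; simp [hy])
    have h2 : y ≠ listMax l := by
      intro hc; exact hdisj hy (by rw [hc]; simp)
    omega
  obtain ⟨y0, hy0⟩ := List.exists_mem_of_ne_nil v hvne
  have hy01 : 1 ≤ y0 := hpos y0 (by rw [hv]; simp [hy0])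
  have hy0lt := hbv y0 hy0
  have hlv : 1 ≤ listMax v := le_trans hy01 (le_listMax hy0)
  have hm2 : 2 ≤ listMax l := by omega
  have hm1 : listMax l ≠ 1 := by omega
  have hstep := sdrop_step hvne hndv hbv hm1
  rw [min_eq_right (by omega : 1 ≤ listMax l)] at hstep
  have hmax : listMax (sdrop l) = listMax v := by
    rw [hv, hstep]
    apply listMax_eq
    · simp
    · intro y hy
      rcases List.mem_append.mp hy with h | h
      · exact le_of_lt (sdrop_lt_max hvne hndv y h)
      · rcases List.mem_cons.mp h with rfl | h
        · exact le_rfl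
        · rw [List.mem_singleton] at h
          subst h
          exact hlv
  constructor
  · rw [hmax, hv, hstep]
  · rw [hv, hstep, show sdrop v ++ [listMax v, 1] = (sdrop v ++ [listMax v]) ++ [1] by simp,
      List.getLast?_concat]

/-- Main iteration lemma: the `k`-th iterate ends with the letter `1` iff
`l` ends with `[max l, 1]`. -/
lemma ends_iter_iff {l : List ℕ} (hnd : l.Nodup) (hpos : ∀ y ∈ l, 1 ≤ y) :
    ∀ k, 1 ≤ k → k + 2 ≤ l.length →
      ((sdrop^[k] l).getLast? = some 1 ↔ ∃ v, l = v ++ [listMax l, 1]) := by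
  induction' hk : l.length using Nat.strong_induction_on with m ih generalizing l
  subst hk
  intro k hk1 hk2
  obtain ⟨j, rfl⟩ : ∃ j, k = j + 1 := ⟨k - 1, by omega⟩
  cases j with
  | zero =>
    simp only [Nat.zero_add, Function.iterate_one]
    constructor
    · exact ends_of_sdrop_last hnd hpos (by omega)
    · rintro ⟨v, hv⟩
      exact (ends_step hnd hpos (by omega) hv).2
  | succ j =>
    have hlne : l ≠ [] := by intro hc; rw [hc] at hk2; simp at hk2
    have hsdlen : (sdrop l).length = l.length - 1 := sdrop_length hlne hnd
    have hihyp := ih (sdrop l).length (by omega) (sdrop_nodup hnd)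
      (fun y hy => hpos y (sdrop_subset hnd y hy)) rfl (j+1) (by omega) (by omega)
    rw [show j + 1 + 1 = (j + 1) + 1 from rfl, Function.iterate_succ_apply]
    rw [hihyp]
    constructor
    · rintro ⟨v, hv⟩
      apply ends_of_sdrop_last hnd hpos (by omega)
      rw [hv, show v ++ [listMax (sdrop l), 1] = (v ++ [listMax (sdrop l)]) ++ [1] by simp,
        List.getLast?_concat]
    · rintro ⟨v, hv⟩
      obtain ⟨h1, _⟩ := ends_step hnd hpos (by omega) hv
      refine ⟨sdrop v, ?_⟩
      exact h1

/-! ### Small helper lemmas for the endgame -/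

lemma pair_cases {u : List ℕ} (h : u.Perm [1, 2]) : u = [1, 2] ∨ u = [2, 1] := by
  have hlen : u.length = 2 := by rw [h.length_eq]; rfl
  obtain ⟨a, b, hab⟩ : ∃ a b, u = [a, b] := by
    cases u with
    | nil => simp at hlen
    | cons a u2 =>
      cases u2 with
      | nil => simp at hlen
      | cons b u3 =>
        cases u3 with
        | nil => exact ⟨a, b, rfl⟩
        | cons c u4 => simp at hlen
  subst hab
  have ha : a ∈ [1, 2] := h.mem_iff.mp (by simp)
  have hb : b ∈ [1, 2] := h.mem_iff.mp (by simp)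
  have hnd : ([a, b] : List ℕ).Nodup := h.nodup_iff.mpr (by decide)
  have hne : a ≠ b := by simp at hnd; exact hnd
  simp only [List.mem_cons, List.not_mem_nil, or_false] at ha hb
  rcases ha with rfl | rfl <;> rcases hb with rfl | rfl <;> simp at hne ⊢

lemma not_sorted_snoc_ge {u : List ℕ} {p q : ℕ} (h : q ≤ p) :
    ¬ (u ++ [p, q]).Pairwise (· < ·) := by
  intro hs
  have := (List.pairwise_append.mp hs).2.1
  simp at this
  omega

/-- For all `n ≥ 6`, a permutation `π` of `{1,…,n}` with the letter `n` in the
second-to-last position satisfies `ssc(π) = n−3` iff (a) `π_n = 3`; or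
(b) `3 < π_n < n−1` and `π` ends with `(n−1), 1, n, π_n`; or (c) `π_n = n−1`
and `π` ends with `(n−2), 1, n, (n−1)`. -/
theorem ssc_eq_n_sub_three_iff_of_second_to_last (n : ℕ) (hn : 6 ≤ n) (π : List ℕ)
    (hπ : IsPermWord n π) (w : List ℕ) (x : ℕ) (hform : π = w ++ [n, x]) :
    ssc π = n - 3 ↔
      x = 3 ∨
      (3 < x ∧ x < n - 1 ∧ ∃ v : List ℕ, π = v ++ [n - 1, 1, n, x]) ∨
      (x = n - 1 ∧ ∃ v : List ℕ, π = v ++ [n - 2, 1, n, n - 1]) := by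
  obtain ⟨m, rfl⟩ : ∃ m, n = m + 6 := ⟨n - 6, by omega⟩
  rw [IsPermWord] at hπ
  have hnd : π.Nodup := hπ.nodup_iff.mpr (List.nodup_range' (s := 1) (n := m+6))
  have hlen : π.length = m + 6 := by rw [hπ.length_eq, List.length_range']
  have hwlen : w.length = m + 4 := by
    rw [hform] at hlen; simp at hlen; omega
  have hdisj := List.disjoint_of_nodup_append (hform ▸ hnd)
  have hxw : x ∉ w := fun h => hdisj h (by simp)
  have hnw : (m+6) ∉ w := fun h => hdisj h (by simp)
  have hxmem : x ∈ List.range' 1 (m+6) := hπ.mem_iff.mp (by rw [hform]; simp)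
  have hx1 : 1 ≤ x := (List.mem_range'_1.mp hxmem).1
  have hxle : x ≤ m + 6 := by have := (List.mem_range'_1.mp hxmem).2; omega
  have hnx : (m + 6) ≠ x := by
    have h2 : ([m+6, x] : List ℕ).Nodup := (hform ▸ hnd).sublist (List.sublist_append_right _ _)
    simp at h2
    exact h2
  have hx5 : x ≤ m + 5 := by omega
  have hb : ∀ y ∈ w, y < m + 6 := by
    intro y hy
    have hmem : y ∈ List.range' 1 (m+6) := hπ.mem_iff.mp (by rw [hform]; simp [hy])
    have h1 := (List.mem_range'_1.mp hmem).2
    have h2 : y ≠ m + 6 := fun h => hnw (h ▸ hy)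
    omega
  have hwnd : w.Nodup := (hform ▸ hnd).sublist (List.sublist_append_left _ _)
  have hwpos : ∀ y ∈ w, 1 ≤ y := by
    intro y hy
    have hmem : y ∈ List.range' 1 (m+6) := hπ.mem_iff.mp (by rw [hform]; simp [hy])
    exact (List.mem_range'_1.mp hmem).1
  -- `w` is a permutation of `{1,…,m+5} \ {x}`
  have hwperm : w.Perm ((List.range' 1 (m+5)).erase x) := by
    have h1 : (π.erase (m+6)).Perm ((List.range' 1 (m+6)).erase (m+6)) := hπ.erase _
    have h2 : π.erase (m+6) = w ++ [x] := by
      rw [hform, List.erase_append_right _ hnw]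
      simp
    rw [h2, range'_erase_top (by omega)] at h1
    have h3 := h1.erase x
    rw [List.erase_append_right _ hxw] at h3
    simp only [List.erase_cons_head, List.append_nil] at h3
    have he : m + 6 - 1 = m + 5 := by omega
    rw [he] at h3
    exact h3
  -- the main reduction
  have e3 : m + 6 - 3 = m + 3 := by omega
  have hssc := ssc_eq_iff (t := m + 3) hπ (by omega)
  have e31 : m + 3 - 1 = m + 2 := by omega
  rw [e31] at hssc
  rw [e3, hssc]
  -- key iteration formulas
  have hkey3 := key_iter hwnd hb hnx hxw (m+3) (by omega)
  have hkey2 := key_iter hwnd hb hnx hxw (m+2) (by omega)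
  have hBf3 : Bf w (m+6) (m+3) = listMax (sdrop^[m+2] w) := rfl
  have hBf2 : Bf w (m+6) (m+2) = listMax (sdrop^[m+1] w) := rfl
  have hBf1 : Bf w (m+6) (m+1) = listMax (sdrop^[m] w) := rfl
  have hCf3 : Cf w (m+6) x (m+3) = min x (listMax (sdrop^[m+1] w)) := by
    rw [Cf_val hwnd hb (m+2) (by omega), hBf2]
  have hCf2 : Cf w (m+6) x (m+2) = min x (listMax (sdrop^[m] w)) := by
    rw [Cf_val hwnd hb (m+1) (by omega), hBf1]
  -- letter sets
  have hwperm' : w.Perm ((List.range' 1 (m+6-1)).erase x) := by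
    rw [show m+6-1 = m+5 by omega]; exact hwperm
  have hlet := letters_iter (n := m+6) hx1 (by omega) (by omega) hwperm' 
  have e61 : m + 6 - 1 = m + 5 := by omega
  have e62 : m + 6 - 2 = m + 4 := by omega
  rw [e61, e62] at hlet
  have hl3 := hlet (m+3) (by omega)
  have hl2 := hlet (m+2) (by omega)
  have hl1 := hlet (m+1) (by omega)
  have hl0 := hlet m (by omega)
  -- rewrite the goal in terms of `w`
  rw [hform, show m+6-1 = m+5 from by omega, show m+6-2 = m+4 from by omega,
    hkey3, hkey2, hBf3, hCf3, hBf2, hCf2]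
  have hEnds := ends_iter_iff hwnd hwpos (m+2) (by omega) (by omega)
  have hxcases : x = 1 ∨ x = 2 ∨ x = 3 ∨ (4 ≤ x ∧ x ≤ m + 5) := by omega
  rcases hxcases with rfl | rfl | rfl | ⟨h4, _⟩
  · -- x = 1
    rw [if_pos (by omega)] at hl2
    have hmax2 : listMax (sdrop^[m+2] w) = 3 := by
      rw [listMax_perm hl2, show m+5-(m+2) = 3 from by omega]; decide
    constructor
    · rintro ⟨h1, _⟩
      rw [hmax2] at h1
      exact absurd h1 (not_sorted_snoc_ge (by omega))
    · rintro (h | ⟨h, _⟩ | ⟨h, _⟩) <;> omega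
  · -- x = 2
    rw [if_pos (by omega)] at hl2
    have hmax2 : listMax (sdrop^[m+2] w) = 3 := by
      rw [listMax_perm hl2, show m+5-(m+2) = 3 from by omega]; decide
    constructor
    · rintro ⟨h1, _⟩
      rw [hmax2] at h1
      exact absurd h1 (not_sorted_snoc_ge (by omega))
    · rintro (h | ⟨h, _⟩ | ⟨h, _⟩) <;> omega
  · -- x = 3
    rw [if_neg (by omega)] at hl3
    rw [if_pos (by omega)] at hl2
    rw [if_pos (by omega)] at hl1
    rw [if_pos (by omega)] at hl0
    have hu3 : sdrop^[m+3] w = [1] := by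
      rw [show m+4-(m+3) = 1 from by omega] at hl3
      exact List.perm_singleton.mp hl3
    have hmax2 : listMax (sdrop^[m+2] w) = 2 := by
      rw [listMax_perm hl2, show m+5-(m+2) = 3 from by omega]; decide
    have hmax1 : listMax (sdrop^[m+1] w) = 4 := by
      rw [listMax_perm hl1, show m+5-(m+1) = 4 from by omega]; decide
    have hmax0 : listMax (sdrop^[m] w) = 5 := by
      rw [listMax_perm hl0, show m+5-m = 5 from by omega]; decide
    apply iff_of_true
    · constructor
      · rw [hu3, hmax2, hmax1]
        decide
      · rw [hmax1, hmax0]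
        exact not_sorted_snoc_ge (by omega)
    · exact Or.inl rfl
  · -- 4 ≤ x
    rw [if_neg (by omega)] at hl3
    rw [if_neg (by omega)] at hl2
    have hu3 : sdrop^[m+3] w = [1] := by
      rw [show m+4-(m+3) = 1 from by omega] at hl3
      exact List.perm_singleton.mp hl3
    have hu2 : (sdrop^[m+2] w).Perm [1, 2] := by
      rw [show m+4-(m+2) = 2 from by omega] at hl2
      exact hl2
    have hmax2 : listMax (sdrop^[m+2] w) = 2 := by
      rw [listMax_perm hu2]; decide
    have hmax1 : listMax (sdrop^[m+1] w) = 3 := by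
      by_cases hc : m + 1 + x ≤ m + 5
      · rw [if_pos hc] at hl1
        rw [listMax_perm hl1, show m+5-(m+1) = 4 from by omega,
          show x = 4 from by omega]
        decide
      · rw [if_neg hc] at hl1
        rw [listMax_perm hl1, show m+4-(m+1) = 3 from by omega]
        decide
    have hmin0 : min x (listMax (sdrop^[m] w)) = 4 := by
      by_cases hc : m + x ≤ m + 5
      · rw [if_pos hc] at hl0
        rw [listMax_perm hl0, show m+5-m = 5 from by omega]
        rcases (show x = 4 ∨ x = 5 from by omega) with rfl | rfl <;> decide
      · rw [if_neg hc] at hl0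
        rw [listMax_perm hl0, show m+4-m = 4 from by omega]
        have : listMax (List.range' 1 4) = 4 := by decide
        omega
    rw [hu3, hmax2, hmax1, hmin0, show min x 3 = 3 from by omega]
    have hS1 : ([1] ++ [2, 3] : List ℕ).Pairwise (· < ·) := by decide
    rw [and_iff_right hS1]
    rcases (show x ≤ m + 4 ∨ x = m + 5 from by omega) with hxs | rfl
    · -- condition (b)
      have hlmw : listMax w = m + 5 := by
        rw [listMax_perm hwperm, listMax_range'_erase (by omega) (by omega)]
      have hRHS : (x = 3 ∨
          (3 < x ∧ x < m+5 ∧ ∃ v, w ++ [m+6, x] = v ++ [m+5, 1, m+6, x]) ∨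
          (x = m+5 ∧ ∃ v, w ++ [m+6, x] = v ++ [m+4, 1, m+6, m+5])) ↔
          ∃ v, w = v ++ [listMax w, 1] := by
        rw [hlmw]
        constructor
        · rintro (h | ⟨_, _, v, hv⟩ | ⟨h, _⟩)
          · omega
          · refine ⟨v, ?_⟩
            have hv' : w ++ [m+6, x] = (v ++ [m+5, 1]) ++ [m+6, x] := by rw [hv]; simp
            exact (List.append_inj' hv' rfl).1
          · omega
        · rintro ⟨v, hv⟩
          exact Or.inr (Or.inl ⟨by omega, by omega, v, by rw [hv]; simp⟩)
      rw [hRHS, ← hEnds]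
      rcases pair_cases hu2 with h | h <;> rw [h]
      · exact iff_of_false (fun hc => hc (by decide)) (by decide)
      · exact iff_of_true (by decide) (by decide)
    · -- condition (c)
      have hlmw : listMax w = m + 4 := by
        rw [listMax_perm hwperm, range'_erase_top (by omega),
          show m+5-1 = m+4 from by omega, listMax_range' (by omega)]
      have hRHS : ((m+5 : ℕ) = 3 ∨
          (3 < (m+5:ℕ) ∧ m+5 < m+5 ∧ ∃ v, w ++ [m+6, m+5] = v ++ [m+5, 1, m+6, m+5]) ∨
          ((m+5:ℕ) = m+5 ∧ ∃ v, w ++ [m+6, m+5] = v ++ [m+4, 1, m+6, m+5])) ↔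
          ∃ v, w = v ++ [listMax w, 1] := by
        rw [hlmw]
        constructor
        · rintro (h | ⟨_, h, _⟩ | ⟨_, v, hv⟩)
          · omega
          · omega
          · refine ⟨v, ?_⟩
            have hv' : w ++ [m+6, m+5] = (v ++ [m+4, 1]) ++ [m+6, m+5] := by rw [hv]; simp
            exact (List.append_inj' hv' rfl).1
        · rintro ⟨v, hv⟩
          exact Or.inr (Or.inr ⟨rfl, v, by rw [hv]; simp⟩)
      rw [hRHS, ← hEnds]
      rcases pair_cases hu2 with h | h <;> rw [h]
      · exact iff_of_false (fun hc => hc (by decide)) (by decide)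
      · exact iff_of_true (by decide) (by decide)
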